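/- arXiv:2109.11528 — 2 statements merged into one kernel-verified Lean document; each statement's English description precedes it below -/
import Mathlib

section
/- The map (A, M) ↦ tr((A M A)^s) on pairs of 2×2 positive definite matrices is not jointly convex for any s > 0. -/
open Matrix
open scoped ComplexOrder

variable {n : Type*} [Fintype n] [DecidableEq n]

/-- Real power of a matrix via the spectral functional calculus (junk value `0`
for non-Hermitian matrices). -/
noncomputable def matRpow (r : ℝ) (A : Matrix n n ℂ) : Matrix n n ℂ :=
  if hA : A.IsHermitian then
    (hA.eigenvectorUnitary : Matrix n n ℂ) *
      Matrix.diagonal (fun i => ((hA.eigenvalues i ^ r : ℝ) : ℂ)) *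
      (hA.eigenvectorUnitary : Matrix n n ℂ)ᴴ
  else 0

/-- `Λ_{r,s}(A)[K,M] = tr((K* A^r M A^r K)^s)`. -/
noncomputable def Lam (r s : ℝ) (K M A : Matrix n n ℂ) : ℂ :=
  (matRpow s (Kᴴ * matRpow r A * M * matRpow r A * K)).trace

lemma eigenvalues_smul_one (c : ℝ)
    (hA : ((c : ℂ) • (1 : Matrix n n ℂ)).IsHermitian) (i : n) :
    hA.eigenvalues i = c := by
  have h := hA.conjStarAlgAut_star_eigenvectorUnitary
  rw [Unitary.conjStarAlgAut_star_apply] at h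
  have hU : (star (hA.eigenvectorUnitary : Matrix n n ℂ)) *
      (hA.eigenvectorUnitary : Matrix n n ℂ) = 1 :=
    Unitary.coe_star_mul_self _
  rw [Matrix.mul_smul, smul_mul_assoc, mul_one, hU] at h
  have := congrFun (congrFun h.symm i) i
  simp only [diagonal_apply_eq, Function.comp_apply, Matrix.smul_apply, one_apply_eq,
    smul_eq_mul, mul_one] at this
  exact RCLike.ofReal_injective (K := ℂ) this

lemma matRpow_smul_one (r c : ℝ) :
    matRpow r ((c : ℂ) • (1 : Matrix n n ℂ)) = ((c ^ r : ℝ) : ℂ) • 1 := by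
  have hA : ((c : ℂ) • (1 : Matrix n n ℂ)).IsHermitian := by
    unfold Matrix.IsHermitian
    rw [conjTranspose_smul, conjTranspose_one]
    simp
  rw [matRpow, dif_pos hA]
  have hd : (Matrix.diagonal (fun i => ((hA.eigenvalues i ^ r : ℝ) : ℂ)))
      = ((c ^ r : ℝ) : ℂ) • (1 : Matrix n n ℂ) := by
    ext i j
    rcases eq_or_ne i j with rfl | hij
    · simp [eigenvalues_smul_one c hA]
    · simp [Matrix.diagonal_apply_ne _ hij, Matrix.one_apply_ne hij]
  rw [hd, Matrix.mul_smul, smul_mul_assoc, mul_one]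
  congr 1
  simpa [Matrix.star_eq_conjTranspose] using Unitary.coe_mul_star_self hA.eigenvectorUnitary

lemma trace_re_matRpow_smul_one (s c : ℝ) :
    ((matRpow s ((c : ℂ) • (1 : Matrix (Fin 2) (Fin 2) ℂ))).trace).re = 2 * c ^ s := by
  rw [matRpow_smul_one, trace_smul, trace_one]
  simp
  ring

/-- The map `(A, M) ↦ tr((A M A)^s)` on pairs of `2×2` positive definite matrices
is not jointly convex for any `s > 0`. -/
theorem not_jointly_convex (s : ℝ) (hs : 0 < s) :
    ¬ ConvexOn ℝ
      {p : Matrix (Fin 2) (Fin 2) ℂ × Matrix (Fin 2) (Fin 2) ℂ | p.1.PosDef ∧ p.2.PosDef}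
      (fun p => ((matRpow s (p.1 * p.2 * p.1)).trace).re) := by
  intro h
  set A₁ : Matrix (Fin 2) (Fin 2) ℂ := diagonal ![(1/2 : ℂ), 1] with hA₁
  set M₁ : Matrix (Fin 2) (Fin 2) ℂ := diagonal ![(4 : ℂ), 1] with hM₁
  set A₂ : Matrix (Fin 2) (Fin 2) ℂ := diagonal ![(1 : ℂ), 1/2] with hA₂
  set M₂ : Matrix (Fin 2) (Fin 2) ℂ := diagonal ![(1 : ℂ), 4] with hM₂
  have mem₁ : (A₁, M₁) ∈ {p : Matrix (Fin 2) (Fin 2) ℂ × Matrix (Fin 2) (Fin 2) ℂ |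
      p.1.PosDef ∧ p.2.PosDef} := by
    constructor <;>
    · rw [Matrix.posDef_diagonal_iff]
      intro i
      fin_cases i <;> simp <;>
        { rw [show (2⁻¹:ℂ) = ((2⁻¹:ℝ):ℂ) by norm_num]; exact Complex.zero_lt_real.mpr (by norm_num) }
  have mem₂ : (A₂, M₂) ∈ {p : Matrix (Fin 2) (Fin 2) ℂ × Matrix (Fin 2) (Fin 2) ℂ |
      p.1.PosDef ∧ p.2.PosDef} := by
    constructor <;>
    · rw [Matrix.posDef_diagonal_iff]
      intro i
      fin_cases i <;> simp <;>
        { rw [show (2⁻¹:ℂ) = ((2⁻¹:ℝ):ℂ) by norm_num]; exact Complex.zero_lt_real.mpr (by norm_num) }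
  have key := h.2 mem₁ mem₂ (by norm_num : (0:ℝ) ≤ 1/2) (by norm_num : (0:ℝ) ≤ 1/2)
    (by norm_num : (1/2 : ℝ) + 1/2 = 1)
  have e₁ : A₁ * M₁ * A₁ = ((1 : ℝ) : ℂ) • 1 := by
    rw [hA₁, hM₁, diagonal_mul_diagonal, diagonal_mul_diagonal]
    ext i j
    fin_cases i <;> fin_cases j <;>
      simp [Matrix.diagonal_apply, Matrix.one_apply] <;> norm_num
  have e₂ : A₂ * M₂ * A₂ = ((1 : ℝ) : ℂ) • 1 := by
    rw [hA₂, hM₂, diagonal_mul_diagonal, diagonal_mul_diagonal]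
    ext i j
    fin_cases i <;> fin_cases j <;>
      simp [Matrix.diagonal_apply, Matrix.one_apply] <;> norm_num
  have e₃ : ((1/2 : ℝ) • (A₁, M₁) + (1/2 : ℝ) • (A₂, M₂) :
      Matrix (Fin 2) (Fin 2) ℂ × Matrix (Fin 2) (Fin 2) ℂ).1 *
      ((1/2 : ℝ) • (A₁, M₁) + (1/2 : ℝ) • (A₂, M₂)).2 *
      ((1/2 : ℝ) • (A₁, M₁) + (1/2 : ℝ) • (A₂, M₂)).1 = ((45/32 : ℝ) : ℂ) • 1 := by
    simp only [Prod.smul_fst, Prod.smul_snd, Prod.fst_add, Prod.snd_add, Prod.smul_mk,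
      Prod.mk_add_mk]
    rw [hA₁, hM₁, hA₂, hM₂]
    ext i j
    fin_cases i <;> fin_cases j <;>
      simp [Matrix.mul_apply, Fin.sum_univ_two, Matrix.diagonal_apply, Matrix.one_apply,
        Complex.real_smul] <;> norm_num
  simp only [e₁, e₂, e₃] at key
  simp only [trace_re_matRpow_smul_one] at key
  rw [Real.one_rpow] at key
  have h1 : (1 : ℝ) < (45/32 : ℝ) ^ s :=
    (Real.one_lt_rpow_iff_of_pos (by norm_num)).2 (Or.inl ⟨by norm_num, hs⟩)
  simp only [smul_eq_mul] at key
  nlinarith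
end

section
/- The map A ↦ tr((K* A M A K)^s) on 2×2 positive definite matrices A is not concave for any s > 0, when K = [[1,0],[0,0]] and M = [[1,t],[t,1]] with 0 < t² < 1/2. -/
open Matrix
open scoped ComplexOrder

variable {n : Type*} [Fintype n] [DecidableEq n]

lemma trace_conj_diag (u : Matrix n n ℂ) (hu : u ∈ Matrix.unitaryGroup n ℂ) (d : n → ℂ) :
    (u * Matrix.diagonal d * star u).trace = ∑ i, d i := by
  rw [Matrix.trace_mul_cycle, Matrix.mem_unitaryGroup_iff'.mp hu, one_mul, Matrix.trace_diagonal]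

lemma trace_matRpow (s : ℝ) (B : Matrix n n ℂ) (hB : B.IsHermitian) :
    (matRpow s B).trace = ∑ i, ((hB.eigenvalues i ^ s : ℝ) : ℂ) := by
  rw [matRpow, dif_pos hB, ← Matrix.star_eq_conjTranspose,
    trace_conj_diag _ (hB.eigenvectorUnitary).2]

lemma trace_sq (B : Matrix n n ℂ) (hB : B.IsHermitian) :
    (B * B).trace = ∑ i, ((hB.eigenvalues i : ℂ)) ^ 2 := by
  set u : Matrix n n ℂ := (hB.eigenvectorUnitary : Matrix n n ℂ) with hu_def
  have hu := (hB.eigenvectorUnitary).2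
  have hcancel : ∀ Y : Matrix n n ℂ, star u * (u * Y) = Y := fun Y => by
    rw [← mul_assoc, Matrix.mem_unitaryGroup_iff'.mp hu, one_mul]
  have h := hB.spectral_theorem
  have hBB : B * B = u * Matrix.diagonal (fun i => ((hB.eigenvalues i : ℂ)) ^ 2) * star u := by
    conv_lhs => rw [show B = u * Matrix.diagonal (RCLike.ofReal ∘ hB.eigenvalues) * star u from h]
    simp only [mul_assoc, hcancel]
    rw [← mul_assoc (Matrix.diagonal _), Matrix.diagonal_mul_diagonal]
    congr 2
    ext i
    simp [pow_two]
  rw [hBB, trace_conj_diag _ hu]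

lemma herm_b (b : ℝ) : (!![(b:ℂ), 0; 0, 0] : Matrix (Fin 2) (Fin 2) ℂ).IsHermitian := by
  ext i j
  fin_cases i <;> fin_cases j <;>
    simp [Matrix.IsHermitian, Matrix.conjTranspose_apply]

lemma trace_eq_sum_eig (B : Matrix n n ℂ) (hB : B.IsHermitian) :
    B.trace = ∑ i, ((hB.eigenvalues i : ℂ)) := by
  conv_lhs => rw [hB.spectral_theorem, Unitary.conjStarAlgAut_apply]
  rw [trace_conj_diag _ (hB.eigenvectorUnitary).2]
  rfl

lemma key_trace (s : ℝ) (hs : 0 < s) (b : ℝ) :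
    ((matRpow s (!![(b:ℂ), 0; 0, 0] : Matrix (Fin 2) (Fin 2) ℂ)).trace).re = b ^ s := by
  have hB := herm_b b
  set E := hB.eigenvalues with hE
  have h1 : E 0 + E 1 = b := by
    have := trace_eq_sum_eig _ hB
    rw [Matrix.trace_fin_two_of, Fin.sum_univ_two] at this
    have := this.symm
    rw [add_zero] at this
    exact_mod_cast this
  have h2 : E 0 ^ 2 + E 1 ^ 2 = b ^ 2 := by
    have := trace_sq _ hB
    rw [show (!![(b:ℂ), 0; 0, 0] * !![(b:ℂ), 0; 0, 0]) = !![((b^2:ℝ):ℂ), 0; 0, 0] by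
      rw [Matrix.mul_fin_two]; norm_num; push_cast; ring] at this
    rw [Matrix.trace_fin_two_of, Fin.sum_univ_two] at this
    have := this.symm
    rw [add_zero] at this
    exact_mod_cast this
  have h3 : (E 0 + E 1) ^ 2 = b ^ 2 := by rw [h1]
  have hmul : E 0 * E 1 = 0 := by linear_combination (h3 - h2) / 2
  rw [trace_matRpow _ _ hB, Fin.sum_univ_two, ← hE]
  rcases mul_eq_zero.mp hmul with h | h
  · have hb : E 1 = b := by linarith
    rw [h, hb, Real.zero_rpow hs.ne']
    simp
  · have hb : E 0 = b := by linarith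
    rw [h, hb, Real.zero_rpow hs.ne']
    simp

lemma prod_eq (t y : ℝ) :
    (!![1, 0; 0, 0] : Matrix (Fin 2) (Fin 2) ℂ)ᴴ * !![1, (y:ℂ); (y:ℂ), 1] *
      !![1, (t:ℂ); (t:ℂ), 1] * !![1, (y:ℂ); (y:ℂ), 1] * !![1, 0; 0, 0] =
      !![((1 + 2*y*t + y^2 : ℝ) : ℂ), 0; 0, 0] := by
  ext i j
  fin_cases i <;> fin_cases j <;>
    simp [Matrix.mul_apply, Fin.sum_univ_two, Matrix.conjTranspose_apply] <;> push_cast <;> ring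

lemma mid_eq (y : ℝ) :
    (1/2 : ℝ) • (1 : Matrix (Fin 2) (Fin 2) ℂ) + (1/2 : ℝ) • !![1, (y:ℂ); (y:ℂ), 1] =
      !![1, ((y/2 : ℝ):ℂ); ((y/2 : ℝ):ℂ), 1] := by
  ext i j
  fin_cases i <;> fin_cases j <;>
    simp [Matrix.one_apply, Complex.real_smul] <;> push_cast <;> ring

lemma posdef_two (c : ℝ) (hc : c^2 < 1) :
    (!![1, (c:ℂ); (c:ℂ), 1] : Matrix (Fin 2) (Fin 2) ℂ).PosDef := by
  rw [Matrix.posDef_iff_dotProduct_mulVec]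
  constructor
  · ext i j
    fin_cases i <;> fin_cases j <;> simp [Matrix.conjTranspose_apply]
  · intro x hx
    have hor : x 0 ≠ 0 ∨ x 1 ≠ 0 := by
      by_contra h
      push_neg at h
      exact hx (funext fun i => by fin_cases i <;> simp [h.1, h.2])
    have hsum : (0:ℝ) < Complex.normSq (x 0) + Complex.normSq (x 1) := by
      have h0 : (0:ℝ) ≤ Complex.normSq (x 0) := Complex.normSq_nonneg _
      have h1 : (0:ℝ) ≤ Complex.normSq (x 1) := Complex.normSq_nonneg _
      rcases hor with h | h
      · have := Complex.normSq_pos.mpr h; linarith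
      · have := Complex.normSq_pos.mpr h; linarith
    have hval : star x ⬝ᵥ (!![1, (c:ℂ); (c:ℂ), 1] : Matrix (Fin 2) (Fin 2) ℂ) *ᵥ x =
        Complex.ofReal ((x 0).re^2 + (x 0).im^2 + (x 1).re^2 + (x 1).im^2 +
          2*c*((x 0).re*(x 1).re + (x 0).im*(x 1).im)) := by
      simp [dotProduct, Matrix.mulVec, Fin.sum_univ_two, Complex.ext_iff,
        Complex.add_re, Complex.add_im, Complex.mul_re, Complex.mul_im,
        ← Complex.ofReal_pow]
      ring
      exact ⟨trivial, trivial⟩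
    rw [hval, Complex.zero_lt_real]
    have hns : Complex.normSq (x 0) = (x 0).re^2 + (x 0).im^2 := by
      simp [Complex.normSq_apply, sq]
    have hns1 : Complex.normSq (x 1) = (x 1).re^2 + (x 1).im^2 := by
      simp [Complex.normSq_apply, sq]
    rw [hns, hns1] at hsum
    nlinarith [sq_nonneg (c*(x 0).re + (x 1).re), sq_nonneg (c*(x 0).im + (x 1).im),
      sq_nonneg ((x 0).re + c*(x 1).re), sq_nonneg ((x 0).im + c*(x 1).im)]


/-- For `K = [[1,0],[0,0]]` and `M = [[1,t],[t,1]]` with `0 < t² < 1/2`, the map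
`A ↦ tr((K* A M A K)^s)` is not concave on `2×2` positive definite matrices for any `s > 0`. -/
theorem not_concave (s : ℝ) (hs : 0 < s) (t : ℝ) (ht0 : 0 < t ^ 2) (ht : t ^ 2 < 1/2) :
    ¬ ConcaveOn ℝ {A : Matrix (Fin 2) (Fin 2) ℂ | A.PosDef}
      (fun A => ((matRpow s ((!![1, 0; 0, 0] : Matrix (Fin 2) (Fin 2) ℂ)ᴴ * A *
        !![1, (t : ℂ); (t : ℂ), 1] * A * !![1, 0; 0, 0])).trace).re) := by
  intro hconc
  set x : ℝ := -t/2 with hx_def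
  have hx2 : x ^ 2 < 1 := by rw [hx_def]; nlinarith
  have hA1 : (1 : Matrix (Fin 2) (Fin 2) ℂ) ∈ {A : Matrix (Fin 2) (Fin 2) ℂ | A.PosDef} :=
    Matrix.PosDef.one
  have hA2 : (!![1, (x:ℂ); (x:ℂ), 1] : Matrix (Fin 2) (Fin 2) ℂ) ∈
      {A : Matrix (Fin 2) (Fin 2) ℂ | A.PosDef} := posdef_two x hx2
  have v : ∀ y : ℝ,
      ((matRpow s ((!![1, 0; 0, 0] : Matrix (Fin 2) (Fin 2) ℂ)ᴴ * !![1, (y:ℂ); (y:ℂ), 1] *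
        !![1, (t : ℂ); (t : ℂ), 1] * !![1, (y:ℂ); (y:ℂ), 1] * !![1, 0; 0, 0])).trace).re =
        (1 + 2*y*t + y^2 : ℝ) ^ s := by
    intro y
    rw [prod_eq, key_trace s hs]
  have e0 : (1 : Matrix (Fin 2) (Fin 2) ℂ) = !![1, ((0:ℝ):ℂ); ((0:ℝ):ℂ), 1] := by
    ext i j
    fin_cases i <;> fin_cases j <;> simp [Matrix.one_apply]
  have h := hconc.2 hA1 hA2 (by norm_num : (0:ℝ) ≤ 1/2) (by norm_num : (0:ℝ) ≤ 1/2)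
    (by norm_num : (1/2 : ℝ) + 1/2 = 1)
  rw [mid_eq x] at h
  rw [e0] at h
  simp only [v, smul_eq_mul] at h
  -- numeric contradiction
  set m : ℝ := 1 + 2*(x/2)*t + (x/2)^2 with hm_def
  set a : ℝ := 1 + 2*x*t + x^2 with ha_def
  have hm0 : 0 ≤ m := by rw [hm_def, hx_def]; nlinarith
  have hma : m ^ 2 < a := by rw [hm_def, ha_def, hx_def]; nlinarith
  have h2 : (m ^ 2) ^ s < a ^ s := Real.rpow_lt_rpow (sq_nonneg m) hma hs
  have h1 : (m ^ s) ^ 2 = (m ^ 2) ^ s := by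
    rw [← Real.rpow_natCast (m ^ s) 2, ← Real.rpow_natCast m 2, ← Real.rpow_mul hm0,
      ← Real.rpow_mul hm0, mul_comm]
  have h3 : m ^ s ≤ (1 + (m ^ s) ^ 2) / 2 := by nlinarith [sq_nonneg (m ^ s - 1)]
  have h4 : (1 + 2*(0:ℝ)*t + 0^2 : ℝ) ^ s = 1 := by norm_num
  rw [h4] at h
  linarith [h, h2, h3, h1.le]
end
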